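/- For every (φ,φ̄) ∈ G(T,R), the linear maps μ : (ℕ→ℂ) → (ℕ→₀ℂ), ω ↦ π_U(φ(ω,0)), and ν : (ℕ→ℂ) → (ℕ→₀ℂ), ν₀ ↦ π_{W*}(φ̄(0,ν₀)), have finite-dimensional ranges, and dim(range μ) = dim(range ν). -/

import Mathlib

open Module Submodule

noncomputable section

abbrev TT : Type := (ℕ → ℂ) × (ℕ →₀ ℂ)
abbrev RR : Type := (ℕ →₀ ℂ) × (ℕ → ℂ)

lemma lc_v_add (v w : ℕ → ℂ) (l : ℕ →₀ ℂ) :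
    Finsupp.linearCombination ℂ (v + w) l
      = Finsupp.linearCombination ℂ v l + Finsupp.linearCombination ℂ w l := by
  classical
  simp only [Finsupp.linearCombination_apply]
  rw [← Finsupp.sum_add]
  exact Finsupp.sum_congr fun i _ => by simp [Pi.add_apply, smul_add, mul_add]

lemma lc_v_smul (c : ℂ) (v : ℕ → ℂ) (l : ℕ →₀ ℂ) :
    Finsupp.linearCombination ℂ (c • v) l = c • Finsupp.linearCombination ℂ v l := by
  classical
  simp only [Finsupp.linearCombination_apply, Finsupp.smul_sum]
  exact Finsupp.sum_congr fun i _ => by simp [Pi.smul_apply, smul_comm, smul_eq_mul, mul_left_comm]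

/-- The nondegenerate pairing `p : T × R → ℂ`,
`p((ω,u),(w,ν)) = Σ_i ω(i)w(i) + Σ_i u(i)ν(i)`. -/
def pairB : TT →ₗ[ℂ] RR →ₗ[ℂ] ℂ :=
  LinearMap.mk₂ ℂ
    (fun x y => Finsupp.linearCombination ℂ x.1 y.1 + Finsupp.linearCombination ℂ y.2 x.2)
    (fun x x' y => by
      simp only [Prod.fst_add, Prod.snd_add, lc_v_add, map_add]; ring)
    (fun c x y => by
      simp only [Prod.smul_fst, Prod.smul_snd, lc_v_smul, map_smul, smul_add])
    (fun x y y' => by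
      simp only [Prod.fst_add, Prod.snd_add, lc_v_add, map_add]; ring)
    (fun c x y => by
      simp only [Prod.smul_fst, Prod.smul_snd, lc_v_smul, map_smul, smul_add])

/-- The Mackey-group condition on a pair of automorphisms:
`p(φ x, y) = p(x, φ̄ y)` for all `x ∈ T`, `y ∈ R`. -/
def IsMackey (φ : TT ≃ₗ[ℂ] TT) (ψ : RR ≃ₗ[ℂ] RR) : Prop :=
  ∀ (x : TT) (y : RR), pairB (φ x) y = pairB x (ψ y)

/-- `W^♯ = (ℕ→ℂ) × {0} ⊆ T`. -/
def Wsharp : Submodule ℂ TT := LinearMap.range (LinearMap.inl ℂ (ℕ → ℂ) (ℕ →₀ ℂ))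

/-- `U^♯ = {0} × (ℕ→ℂ) ⊆ R`. -/
def Usharp : Submodule ℂ RR := LinearMap.range (LinearMap.inr ℂ (ℕ →₀ ℂ) (ℕ → ℂ))

/-- `V = (ℕ→₀ℂ) × (ℕ→₀ℂ) ⊆ T`. -/
def Vsub : Submodule ℂ TT :=
  LinearMap.range
    ((Finsupp.lcoeFun : (ℕ →₀ ℂ) →ₗ[ℂ] (ℕ → ℂ)).prodMap
      (LinearMap.id : (ℕ →₀ ℂ) →ₗ[ℂ] (ℕ →₀ ℂ)))

/-- `W = (ℕ→₀ℂ) × {0} ⊆ T`. -/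
def Wsub : Submodule ℂ TT :=
  LinearMap.range
    ((LinearMap.inl ℂ (ℕ → ℂ) (ℕ →₀ ℂ)).comp
      (Finsupp.lcoeFun : (ℕ →₀ ℂ) →ₗ[ℂ] (ℕ → ℂ)))

/-- `π_U : T → (ℕ→₀ℂ)`, the second projection. -/
def piU : TT →ₗ[ℂ] (ℕ →₀ ℂ) := LinearMap.snd ℂ (ℕ → ℂ) (ℕ →₀ ℂ)

/-- `π_{W*} : R → (ℕ→₀ℂ)`, the first projection. -/
def piW : RR →ₗ[ℂ] (ℕ →₀ ℂ) := LinearMap.fst ℂ (ℕ →₀ ℂ) (ℕ → ℂ)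

/-- The degree `d(φ) = dim π_U(φ(W^♯)) − dim π_U(φ^{-1}(W^♯))`. -/
def deg (φ : TT ≃ₗ[ℂ] TT) : ℤ :=
  (Module.finrank ℂ ((Wsharp.map φ.toLinearMap).map piU) : ℤ) -
    (Module.finrank ℂ ((Wsharp.map φ.symm.toLinearMap).map piU) : ℤ)

/-- `span {(δ_i, 0) : i ≥ n} ⊆ T`. -/
def tailSpan (n : ℕ) : Submodule ℂ TT :=
  Submodule.span ℂ
    ((fun i => ((((Finsupp.single i (1 : ℂ)) : ℕ →₀ ℂ) : ℕ → ℂ), (0 : ℕ →₀ ℂ))) '' {i | n ≤ i})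

/-- `W'` is E-commensurable of index `k` with `W`:
`W' = G ⊕ span{(δ_i,0) : i ≥ n}` with `G ⊆ V` finite-dimensional of dimension `n + k`. -/
def Ecomm (W' : Submodule ℂ TT) (k : ℤ) : Prop :=
  ∃ (n : ℕ) (G : Submodule ℂ TT), G ≤ Vsub ∧ FiniteDimensional ℂ G ∧
    (Module.finrank ℂ G : ℤ) = (n : ℤ) + k ∧ Disjoint G (tailSpan n) ∧
    W' = G ⊔ tailSpan n

/-- `W'^⊥ = {y ∈ R : p(x,y) = 0 for all x ∈ W'}`. -/
def perpR (W' : Submodule ℂ TT) : Submodule ℂ RR :=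
  ⨅ x ∈ (W' : Set TT), LinearMap.ker (pairB x)

/-- `Y^⊥ = {x ∈ T : p(x,y) = 0 for all y ∈ Y}`. -/
def perpT (Y : Submodule ℂ RR) : Submodule ℂ TT :=
  ⨅ y ∈ (Y : Set RR), LinearMap.ker (pairB.flip y)

/-- The action `φ·W' = φ((W'^⊥)^⊥) ∩ V`. -/
def actOn (φ : TT ≃ₗ[ℂ] TT) (W' : Submodule ℂ TT) : Submodule ℂ TT :=
  ((perpT (perpR W')).map φ.toLinearMap) ⊓ Vsub

end


/-- For every `(φ,φ̄) ∈ G(T,R)`, the maps `μ : ω ↦ π_U(φ(ω,0))` and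
`ν : ν₀ ↦ π_{W*}(φ̄(0,ν₀))` have finite-dimensional ranges of the same dimension. -/

lemma aux_lc_pi_single (i : ℕ) (l : ℕ →₀ ℂ) :
    Finsupp.linearCombination ℂ (Pi.single i (1:ℂ)) l = l i := by
  classical
  rw [Finsupp.linearCombination_apply, Finsupp.sum,
    Finset.sum_eq_single i (fun j _ hj => by simp [Pi.single_apply, hj])
      (fun h => by simp [Finsupp.notMem_support_iff.mp h])]
  simp

lemma aux_lc_pow (t : ℂ) (l : ℕ →₀ ℂ) :
    Finsupp.linearCombination ℂ (fun j => t ^ j) l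
      = Polynomial.eval t (Polynomial.ofFinsupp (AddMonoidAlgebra.ofCoeff l)) := by
  classical
  rw [Finsupp.linearCombination_apply, Finsupp.sum, Polynomial.eval_eq_sum,
    Polynomial.sum, Polynomial.support_ofFinsupp]
  exact Finset.sum_congr rfl fun j _ => by
    simp [Polynomial.coeff_ofFinsupp, AddMonoidAlgebra.coeff_ofCoeff, smul_eq_mul, mul_comm]

lemma aux_key (r : ℕ → (ℕ →₀ ℂ))
    (H : ∀ ω : ℕ → ℂ, {i | Finsupp.linearCombination ℂ ω (r i) ≠ 0}.Finite) :
    {i | r i ≠ 0}.Finite := by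
  classical
  by_contra hinf
  replace hinf : {i | r i ≠ 0}.Infinite := hinf
  set B : Set ℂ :=
    ⋃ i ∈ {i | r i ≠ 0}, {t | Polynomial.IsRoot (Polynomial.ofFinsupp (AddMonoidAlgebra.ofCoeff (r i))) t} with hB
  have hBc : B.Countable := by
    refine Set.Countable.biUnion (Set.to_countable _) fun i hi => ?_
    exact (Polynomial.finite_setOf_isRoot
      (by simpa [Polynomial.ofFinsupp_eq_zero] using hi)).countable
  obtain ⟨t, ht⟩ : ∃ t : ℂ, t ∉ B := by
    by_contra hall
    push_neg at hall
    exact not_countable_complex (Set.eq_univ_of_forall hall ▸ hBc)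
  refine hinf.mono (fun i hi => ?_) (H fun j => t ^ j)
  have : ¬ Polynomial.IsRoot (Polynomial.ofFinsupp (AddMonoidAlgebra.ofCoeff (r i))) t := fun hroot =>
    ht (Set.mem_biUnion hi hroot)
  simpa [aux_lc_pow] using this

lemma aux_rank (c : ℕ → (ℕ →₀ ℂ)) (Sfin S'fin : Finset ℕ)
    (hsupp : ∀ j i, i ∉ Sfin → c j i = 0)
    (hout : ∀ j, j ∉ S'fin → c j = 0) :
    finrank ℂ ↥(span ℂ (Set.range c))
      = (Matrix.of fun (i : ↥Sfin) (j : ↥S'fin) => c j.1 i.1).rank := by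
  classical
  set M : Matrix ↥Sfin ↥S'fin ℂ := Matrix.of fun i j => c j.1 i.1 with hM
  set p : Submodule ℂ (ℕ →₀ ℂ) := span ℂ (Set.range c) with hp
  set π : (ℕ →₀ ℂ) →ₗ[ℂ] (↥Sfin → ℂ) := LinearMap.pi fun i => Finsupp.lapply i.1 with hπ
  have hps : p ≤ Finsupp.supported ℂ ℂ ↑Sfin := by
    rw [hp, span_le]
    rintro _ ⟨j, rfl⟩
    intro i hi
    by_contra hns
    exact Finsupp.mem_support_iff.mp hi (hsupp j i hns)
  set e : ↥p →ₗ[ℂ] (↥Sfin → ℂ) := π ∘ₗ p.subtype with he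
  have hinj : Function.Injective e := by
    rw [injective_iff_map_eq_zero]
    rintro ⟨u, hu⟩ hk
    have hπu : π u = 0 := hk
    have : u = 0 := by
      ext i
      by_cases hi : i ∈ Sfin
      · exact congrFun hπu ⟨i, hi⟩
      · by_contra hne
        exact hi (hps hu (Finsupp.mem_support_iff.mpr hne))
    exact Subtype.ext this
  have h1 : finrank ℂ ↥p = finrank ℂ ↥(LinearMap.range e) :=
    (LinearMap.finrank_range_of_inj hinj).symm
  have h2 : LinearMap.range e = (span ℂ (Set.range c)).map π := by
    rw [he, LinearMap.range_comp, Submodule.range_subtype]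
  have h3 : (span ℂ (Set.range c)).map π = span ℂ (Set.range (π ∘ c)) := by
    rw [Submodule.map_span, Set.range_comp]
  have h4 : span ℂ (Set.range (π ∘ c)) = span ℂ (Set.range M.transpose) := by
    have hMT : ∀ j : ↥S'fin, M.transpose j = π (c j.1) := by
      intro j; funext i; rfl
    apply le_antisymm
    · rw [span_le]
      rintro _ ⟨j, rfl⟩
      by_cases hj : j ∈ S'fin
      · exact subset_span ⟨⟨j, hj⟩, (hMT ⟨j, hj⟩)⟩
      · simp only [Function.comp_apply, hout j hj, map_zero]
        exact zero_mem _
    · rw [span_le]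
      rintro _ ⟨j, rfl⟩
      exact subset_span ⟨j.1, by rw [hMT j]; rfl⟩
  rw [h1, h2, h3, h4]
  change finrank ℂ ↥(span ℂ (Set.range M.col)) = _
  rw [← Matrix.range_mulVecLin]
  rfl

theorem stmt3 (φ : TT ≃ₗ[ℂ] TT) (ψ : RR ≃ₗ[ℂ] RR) (h : IsMackey φ ψ) :
    FiniteDimensional ℂ
      (LinearMap.range (piU ∘ₗ φ.toLinearMap ∘ₗ LinearMap.inl ℂ (ℕ → ℂ) (ℕ →₀ ℂ))) ∧
    FiniteDimensional ℂ
      (LinearMap.range (piW ∘ₗ ψ.toLinearMap ∘ₗ LinearMap.inr ℂ (ℕ →₀ ℂ) (ℕ → ℂ))) ∧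
    Module.finrank ℂ
        (LinearMap.range (piU ∘ₗ φ.toLinearMap ∘ₗ LinearMap.inl ℂ (ℕ → ℂ) (ℕ →₀ ℂ)))
      = Module.finrank ℂ
        (LinearMap.range (piW ∘ₗ ψ.toLinearMap ∘ₗ LinearMap.inr ℂ (ℕ →₀ ℂ) (ℕ → ℂ))) := by
  classical
  set f : (ℕ → ℂ) →ₗ[ℂ] (ℕ →₀ ℂ) :=
    piU ∘ₗ φ.toLinearMap ∘ₗ LinearMap.inl ℂ (ℕ → ℂ) (ℕ →₀ ℂ) with hfdef
  set g : (ℕ → ℂ) →ₗ[ℂ] (ℕ →₀ ℂ) :=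
    piW ∘ₗ ψ.toLinearMap ∘ₗ LinearMap.inr ℂ (ℕ →₀ ℂ) (ℕ → ℂ) with hgdef
  have adj : ∀ (ω ν : ℕ → ℂ),
      Finsupp.linearCombination ℂ ν (f ω) = Finsupp.linearCombination ℂ ω (g ν) := by
    intro ω ν
    have h1 := h (ω, 0) (0, ν)
    simpa [pairB, piU, piW, hfdef, hgdef] using h1
  set ee : ℕ → (ℕ → ℂ) := fun i => Pi.single i 1 with heedef
  set r : ℕ → (ℕ →₀ ℂ) := fun i => g (ee i) with hrdef
  set c : ℕ → (ℕ →₀ ℂ) := fun j => f (ee j) with hcdef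
  have hfr : ∀ (ω : ℕ → ℂ) i, f ω i = Finsupp.linearCombination ℂ ω (r i) := by
    intro ω i
    rw [← aux_lc_pi_single i (f ω), adj]
  have hgc : ∀ (ν : ℕ → ℂ) j, g ν j = Finsupp.linearCombination ℂ ν (c j) := by
    intro ν j
    rw [← aux_lc_pi_single j (g ν), ← adj]
  have hrc : ∀ i j, r i j = c j i := by
    intro i j
    rw [hrdef]
    simp only
    rw [hgc (ee i) j, heedef]
    simp only
    rw [aux_lc_pi_single]
  have hS : {i | r i ≠ 0}.Finite := by
    refine aux_key r fun ω => Set.Finite.subset (f ω).support.finite_toSet fun i hi => ?_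
    simp only [Finset.coe_sort_coe, Finset.mem_coe, Finsupp.mem_support_iff]
    rw [hfr ω i]; exact hi
  have hS' : {j | c j ≠ 0}.Finite := by
    refine aux_key c fun ν => Set.Finite.subset (g ν).support.finite_toSet fun j hj => ?_
    simp only [Finset.coe_sort_coe, Finset.mem_coe, Finsupp.mem_support_iff]
    rw [hgc ν j]; exact hj
  set Sfin : Finset ℕ := hS.toFinset with hSfin
  set S'fin : Finset ℕ := hS'.toFinset with hS'fin
  have hc_supp : ∀ j i, i ∉ Sfin → c j i = 0 := by
    intro j i hi
    rw [← hrc]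
    have : r i = 0 := by
      by_contra hne
      exact hi (hS.mem_toFinset.mpr hne)
    rw [this]; rfl
  have hc_out : ∀ j, j ∉ S'fin → c j = 0 := by
    intro j hj
    by_contra hne
    exact hj (hS'.mem_toFinset.mpr hne)
  have hr_supp : ∀ i j, j ∉ S'fin → r i j = 0 := by
    intro i j hj
    rw [hrc, hc_out j hj]; rfl
  have hr_out : ∀ i, i ∉ Sfin → r i = 0 := by
    intro i hi
    by_contra hne
    exact hi (hS.mem_toFinset.mpr hne)
  -- range f = span of the c's
  have hfsum : ∀ ω : ℕ → ℂ, f ω = ∑ j ∈ S'fin, ω j • c j := by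
    intro ω
    ext i
    rw [hfr ω i, Finsupp.linearCombination_apply, Finsupp.sum]
    rw [Finset.sum_subset (fun j hj => by
      by_contra hjn
      exact Finsupp.mem_support_iff.mp hj (hr_supp i j hjn))
      (fun j _ hj => by rw [Finsupp.notMem_support_iff.mp hj, zero_smul])]
    rw [Finsupp.finset_sum_apply]
    refine Finset.sum_congr rfl fun j _ => ?_
    rw [Finsupp.smul_apply, smul_eq_mul, smul_eq_mul, hrc i j, mul_comm]
  have hgsum : ∀ ν : ℕ → ℂ, g ν = ∑ i ∈ Sfin, ν i • r i := by
    intro ν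
    ext j
    rw [hgc ν j, Finsupp.linearCombination_apply, Finsupp.sum]
    rw [Finset.sum_subset (fun i hi => by
      by_contra hin
      exact Finsupp.mem_support_iff.mp hi ((hrc i j).symm ▸
        congrFun (congrArg _ (hr_out i hin)) j))
      (fun i _ hi => by rw [Finsupp.notMem_support_iff.mp hi, zero_smul])]
    rw [Finsupp.finset_sum_apply]
    refine Finset.sum_congr rfl fun i _ => ?_
    rw [Finsupp.smul_apply, smul_eq_mul, smul_eq_mul, ← hrc i j, mul_comm]
  have range_f : LinearMap.range f = span ℂ (Set.range c) := by
    apply le_antisymm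
    · rintro _ ⟨ω, rfl⟩
      rw [hfsum ω]
      exact Submodule.sum_mem _ fun j _ =>
        Submodule.smul_mem _ _ (subset_span ⟨j, rfl⟩)
    · rw [span_le]
      rintro _ ⟨j, rfl⟩
      exact ⟨ee j, rfl⟩
  have range_g : LinearMap.range g = span ℂ (Set.range r) := by
    apply le_antisymm
    · rintro _ ⟨ν, rfl⟩
      rw [hgsum ν]
      exact Submodule.sum_mem _ fun i _ =>
        Submodule.smul_mem _ _ (subset_span ⟨i, rfl⟩)
    · rw [span_le]
      rintro _ ⟨i, rfl⟩
      exact ⟨ee i, rfl⟩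
  have span_c_fin : span ℂ (Set.range c) = span ℂ (c '' ↑S'fin) := by
    apply le_antisymm
    · rw [span_le]
      rintro _ ⟨j, rfl⟩
      by_cases hj : j ∈ S'fin
      · exact subset_span ⟨j, hj, rfl⟩
      · rw [hc_out j hj]; exact zero_mem _
    · rw [span_le]
      rintro _ ⟨j, _, rfl⟩
      exact subset_span ⟨j, rfl⟩
  have span_r_fin : span ℂ (Set.range r) = span ℂ (r '' ↑Sfin) := by
    apply le_antisymm
    · rw [span_le]
      rintro _ ⟨i, rfl⟩
      by_cases hi : i ∈ Sfin
      · exact subset_span ⟨i, hi, rfl⟩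
      · rw [hr_out i hi]; exact zero_mem _
    · rw [span_le]
      rintro _ ⟨i, _, rfl⟩
      exact subset_span ⟨i, rfl⟩
  have fin_f : FiniteDimensional ℂ (LinearMap.range f) := by
    rw [range_f, span_c_fin]
    exact FiniteDimensional.span_of_finite ℂ (S'fin.finite_toSet.image c)
  have fin_g : FiniteDimensional ℂ (LinearMap.range g) := by
    rw [range_g, span_r_fin]
    exact FiniteDimensional.span_of_finite ℂ (Sfin.finite_toSet.image r)
  refine ⟨fin_f, fin_g, ?_⟩
  have e1 : finrank ℂ (LinearMap.range f)
      = (Matrix.of fun (i : ↥Sfin) (j : ↥S'fin) => c j.1 i.1).rank := by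
    rw [range_f]
    exact aux_rank c Sfin S'fin hc_supp hc_out
  have e2 : finrank ℂ (LinearMap.range g)
      = (Matrix.of fun (j : ↥S'fin) (i : ↥Sfin) => r i.1 j.1).rank := by
    rw [range_g]
    exact aux_rank r S'fin Sfin (fun i j hj => hr_supp i j hj) hr_out
  have e3 : (Matrix.of fun (j : ↥S'fin) (i : ↥Sfin) => r i.1 j.1)
      = (Matrix.of fun (i : ↥Sfin) (j : ↥S'fin) => c j.1 i.1).transpose := by
    ext j i
    exact hrc i.1 j.1
  rw [e1, e2, e3, Matrix.rank_transpose]
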